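/- Let 0 < d < n be integers and let E ⊆ ℝⁿ be any set. Then the set Tn(E) of all tangent points of E is contained in a countable union of images of Lipschitz maps from subsets of ℝ^d into ℝⁿ; in particular, Tn(E) is d-rectifiable. -/

import Mathlib

open Set Metric MeasureTheory ENNReal Filter Topology


noncomputable def hContent {n : ℕ} (d : ℕ) (A : Set (EuclideanSpace ℝ (Fin n))) : ℝ≥0∞ :=
  ⨅ (C : ℕ → Set (EuclideanSpace ℝ (Fin n))) (_ : A ⊆ ⋃ i, C i),
    ∑' i, EMetric.diam (C i) ^ d

def LowerContentRegular {n : ℕ} (d : ℕ) (c₀ : ℝ) (E : Set (EuclideanSpace ℝ (Fin n))) : Prop :=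
  ∀ x ∈ E, ∀ r : ℝ, 0 < r → ENNReal.ofReal r < EMetric.diam E →
    ENNReal.ofReal (c₀ * r ^ d) ≤ hContent d (E ∩ ball x r)

def IsAffinePlane {n : ℕ} (d : ℕ) (L : Set (EuclideanSpace ℝ (Fin n))) : Prop :=
  ∃ (z : EuclideanSpace ℝ (Fin n)) (V : Submodule ℝ (EuclideanSpace ℝ (Fin n))),
    Module.finrank ℝ V = d ∧ L = {y | y - z ∈ V}

noncomputable def beta {n : ℕ} (d : ℕ) (p : ℝ) (E : Set (EuclideanSpace ℝ (Fin n)))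
    (x : EuclideanSpace ℝ (Fin n)) (r : ℝ) : ℝ≥0∞ :=
  ⨅ (L : Set (EuclideanSpace ℝ (Fin n))) (_ : IsAffinePlane d L),
    ((∫⁻ t in Ioo (0:ℝ) 1,
        hContent d {y | y ∈ ball x r ∩ E ∧ t * r < infDist y L} *
          ENNReal.ofReal (t ^ (p - 1))) / ENNReal.ofReal r ^ d) ^ (1 / p)

def TangentPoint {n : ℕ} (d : ℕ) (E : Set (EuclideanSpace ℝ (Fin n)))
    (x : EuclideanSpace ℝ (Fin n)) : Prop :=
  ∃ L : Set (EuclideanSpace ℝ (Fin n)), IsAffinePlane d L ∧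
    Tendsto (fun t : ℝ => ⨆ y ∈ E ∩ ball x t, infDist y L / t) (𝓝[>] 0) (𝓝 0)

namespace Stmt11Aux

open Module Function

/-- Zero-extension as a function. -/
noncomputable def extFun (m d : ℕ) (x : EuclideanSpace ℝ (Fin m)) : EuclideanSpace ℝ (Fin d) :=
  WithLp.toLp 2 (fun i : Fin d => if h2 : (i : ℕ) < m then x ⟨i, h2⟩ else 0)

noncomputable def extLI (m d : ℕ) (h : m ≤ d) :
    EuclideanSpace ℝ (Fin m) →ₗᵢ[ℝ] EuclideanSpace ℝ (Fin d) where
  toLinearMap :=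
    { toFun := extFun m d
      map_add' := by
        intro x y
        ext i
        by_cases h2 : (i : ℕ) < m <;> simp [extFun, h2]
      map_smul' := by
        intro c x
        ext i
        by_cases h2 : (i : ℕ) < m <;> simp [extFun, h2] }
  norm_map' := by
    intro x
    have key : ∑ i : Fin d, ‖extFun m d x i‖ ^ 2 = ∑ i : Fin m, ‖x i‖ ^ 2 := by
      have e1 : ∑ i : Fin d, ‖extFun m d x i‖ ^ 2
          = ∑ j ∈ Finset.range d, (if h2 : j < m then ‖x ⟨j, h2⟩‖ ^ 2 else 0) := by
        rw [← Fin.sum_univ_eq_sum_range]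
        refine Finset.sum_congr rfl fun i _ => ?_
        by_cases h2 : (i : ℕ) < m <;> simp [extFun, h2]
      have e2 : ∑ j ∈ Finset.range d, (if h2 : j < m then ‖x ⟨j, h2⟩‖ ^ 2 else 0)
          = ∑ j ∈ Finset.range m, (if h2 : j < m then ‖x ⟨j, h2⟩‖ ^ 2 else 0) := by
        refine (Finset.sum_subset (Finset.range_subset_range.2 h) ?_).symm
        intro j _ hj
        rw [Finset.mem_range] at hj
        simp [hj]
      have e3 : ∑ j ∈ Finset.range m, (if h2 : j < m then ‖x ⟨j, h2⟩‖ ^ 2 else 0)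
          = ∑ i : Fin m, ‖x i‖ ^ 2 := by
        rw [← Fin.sum_univ_eq_sum_range]
        refine Finset.sum_congr rfl fun i _ => ?_
        simp [i.isLt]
      rw [e1, e2, e3]
    show ‖extFun m d x‖ = ‖x‖
    rw [EuclideanSpace.norm_eq, EuclideanSpace.norm_eq, key]

theorem le_biSup_infDist {n : ℕ} (L : Set (EuclideanSpace ℝ (Fin n)))
    (E : Set (EuclideanSpace ℝ (Fin n))) (x y : EuclideanSpace ℝ (Fin n)) {t : ℝ}
    (ht : 0 < t) (hy : y ∈ E ∩ ball x t) :
    infDist y L / t ≤ ⨆ z ∈ E ∩ ball x t, infDist z L / t := by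
  have hB : (0:ℝ) ≤ (infDist x L + t) / t :=
    div_nonneg (add_nonneg infDist_nonneg ht.le) ht.le
  have hbdd : BddAbove (range fun z => ⨆ _ : z ∈ E ∩ ball x t, infDist z L / t) := by
    refine ⟨(infDist x L + t) / t, ?_⟩
    rintro r ⟨z, rfl⟩
    refine Real.iSup_le (fun hz => ?_) hB
    have h1 : infDist z L ≤ infDist x L + dist z x := infDist_le_infDist_add_dist
    have h2 : dist z x ≤ t := le_of_lt (mem_ball.1 hz.2)
    have h3 : infDist z L ≤ infDist x L + t := by linarith
    gcongr
  have h2 := le_ciSup hbdd y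
  rwa [ciSup_pos hy] at h2

theorem proj_le {n : ℕ} (V : Submodule ℝ (EuclideanSpace ℝ (Fin n)))
    (z : EuclideanSpace ℝ (Fin n)) {u : EuclideanSpace ℝ (Fin n)} (hu : u ∈ V) :
    ‖z - Submodule.orthogonalProjectionOnto V z‖ ≤ ‖z - u‖ := by
  rw [← Submodule.starProjection_apply, Submodule.starProjection_minimal]
  refine ciInf_le ⟨0, ?_⟩ (⟨u, hu⟩ : V)
  rintro r ⟨v, rfl⟩
  exact norm_nonneg _


theorem coord_le_norm {d : ℕ} (y : EuclideanSpace ℝ (Fin d)) (i : Fin d) : |y i| ≤ ‖y‖ := by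
  rw [EuclideanSpace.norm_eq]
  refine (Real.le_sqrt (abs_nonneg _) (Finset.sum_nonneg fun j _ => sq_nonneg _)).mpr ?_
  have h1 : |y i| ^ 2 = ‖y i‖ ^ 2 := by rw [Real.norm_eq_abs]
  rw [h1]
  exact Finset.single_le_sum (fun j _ => sq_nonneg ‖y j‖) (Finset.mem_univ i)

theorem approx_basis {n d : ℕ} (hd : 0 < d) (V₀ : Submodule ℝ (EuclideanSpace ℝ (Fin n)))
    (hV₀ : finrank ℝ V₀ = d) (Q : Set (EuclideanSpace ℝ (Fin n))) (hQ : Dense Q) :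
    ∃ w : Fin d → EuclideanSpace ℝ (Fin n), (∀ i, w i ∈ Q) ∧
      ∀ v ∈ V₀, ∃ u ∈ Submodule.span ℝ (Set.range w), ‖v - u‖ ≤ ‖v‖ / 8 := by
  haveI : FiniteDimensional ℝ V₀ := by infer_instance
  let b : OrthonormalBasis (Fin d) ℝ V₀ := (stdOrthonormalBasis ℝ V₀).reindex (finCongr hV₀)
  have hpos : (0:ℝ) < 1 / (8 * d) := by positivity
  choose w hwQ hwd using fun i => hQ.exists_dist_lt ((b i : EuclideanSpace ℝ (Fin n))) hpos
  refine ⟨w, hwQ, ?_⟩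
  intro v hv
  set vv : V₀ := ⟨v, hv⟩ with hvv
  set c : Fin d → ℝ := fun i => b.repr vv i with hc
  refine ⟨∑ i, c i • w i,
    Submodule.sum_mem _ fun i _ =>
      Submodule.smul_mem _ _ (Submodule.subset_span ⟨i, rfl⟩), ?_⟩
  have hvsum : v = ∑ i, c i • (b i : EuclideanSpace ℝ (Fin n)) := by
    have h1 := b.sum_repr vv
    have h2 : ((∑ i, b.repr vv i • b i : V₀) : EuclideanSpace ℝ (Fin n))
        = ∑ i, c i • (b i : EuclideanSpace ℝ (Fin n)) := by
      push_cast
      rfl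
    rw [← h2, h1]
  have hdiff : v - ∑ i, c i • w i
      = ∑ i, c i • ((b i : EuclideanSpace ℝ (Fin n)) - w i) := by
    rw [hvsum, ← Finset.sum_sub_distrib]
    exact Finset.sum_congr rfl fun i _ => (smul_sub _ _ _).symm
  have hci : ∀ i, |c i| ≤ ‖v‖ := by
    intro i
    have h1 := coord_le_norm (b.repr vv) i
    have h2 : ‖b.repr vv‖ = ‖vv‖ := b.repr.norm_map vv
    have h3 : ‖vv‖ = ‖v‖ := rfl
    rw [h2, h3] at h1
    exact h1
  have hbw : ∀ i, ‖(b i : EuclideanSpace ℝ (Fin n)) - w i‖ ≤ 1 / (8 * d) := by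
    intro i
    rw [← dist_eq_norm]
    exact (hwd i).le
  calc ‖v - ∑ i, c i • w i‖ = ‖∑ i, c i • ((b i : EuclideanSpace ℝ (Fin n)) - w i)‖ := by
        rw [hdiff]
    _ ≤ ∑ i, ‖c i • ((b i : EuclideanSpace ℝ (Fin n)) - w i)‖ := norm_sum_le _ _
    _ ≤ ∑ _i : Fin d, ‖v‖ * (1 / (8 * d)) := by
        refine Finset.sum_le_sum fun i _ => ?_
        rw [norm_smul, Real.norm_eq_abs]
        exact mul_le_mul (hci i) (hbw i) (norm_nonneg _) (norm_nonneg _)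
    _ = d * (‖v‖ * (1 / (8 * d))) := by
        rw [Finset.sum_const, Finset.card_univ, Fintype.card_fin, nsmul_eq_mul]
    _ ≤ ‖v‖ / 8 := by
        have hd' : (0:ℝ) < d := by exact_mod_cast hd
        rw [mul_comm, mul_assoc]
        rw [show (1 / (8 * (d:ℝ)) * d) = 1/8 by field_simp]
        rw [div_eq_mul_one_div ‖v‖ 8]

theorem chart {n d : ℕ} (V : Submodule ℝ (EuclideanSpace ℝ (Fin n))) (hV : finrank ℝ V ≤ d)
    (S : Set (EuclideanSpace ℝ (Fin n)))
    (hS : ∀ x ∈ S, ∀ y ∈ S,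
      ‖(y - x) - (Submodule.orthogonalProjectionOnto V (y - x) : EuclideanSpace ℝ (Fin n))‖ ≤ dist y x / 2) :
    ∃ (s : Set (EuclideanSpace ℝ (Fin d))) (f : EuclideanSpace ℝ (Fin d) → EuclideanSpace ℝ (Fin n)),
      LipschitzOnWith 2 f s ∧ S ⊆ f '' s := by
  classical
  set φ : EuclideanSpace ℝ (Fin n) → EuclideanSpace ℝ (Fin d) :=
    fun z => extLI (finrank ℝ V) d hV ((stdOrthonormalBasis ℝ V).repr (Submodule.orthogonalProjectionOnto V z))
    with hφ
  have hlow : ∀ x ∈ S, ∀ y ∈ S, dist x y ≤ 2 * dist (φ x) (φ y) := by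
    intro x hx y hy
    have h1 := hS x hx y hy
    have h2 : dist (φ y) (φ x)
        = ‖(Submodule.orthogonalProjectionOnto V (y - x) : EuclideanSpace ℝ (Fin n))‖ := by
      rw [dist_eq_norm, hφ]
      simp only
      rw [← map_sub (extLI (finrank ℝ V) d hV), (extLI (finrank ℝ V) d hV).norm_map,
        ← map_sub ((stdOrthonormalBasis ℝ V).repr), LinearIsometryEquiv.norm_map,
        ← map_sub (Submodule.orthogonalProjectionOnto V)]
      rfl
    have h3 : ‖y - x‖ ≤ ‖(y - x) - (Submodule.orthogonalProjectionOnto V (y - x) : EuclideanSpace ℝ (Fin n))‖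
        + ‖(Submodule.orthogonalProjectionOnto V (y - x) : EuclideanSpace ℝ (Fin n))‖ := by
      calc ‖y - x‖ = ‖((y - x) - (Submodule.orthogonalProjectionOnto V (y - x) : EuclideanSpace ℝ (Fin n)))
            + (Submodule.orthogonalProjectionOnto V (y - x) : EuclideanSpace ℝ (Fin n))‖ := by abel_nf
        _ ≤ _ := norm_add_le _ _
    have h4 : dist x y = ‖y - x‖ := by rw [dist_eq_norm, norm_sub_rev]
    have h5 : dist y x = ‖y - x‖ := by rw [dist_eq_norm]
    rw [dist_comm (φ x) (φ y), h2]
    rw [h5] at h1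
    linarith
  refine ⟨φ '' S, Function.invFunOn φ S, ?_, ?_⟩
  · refine LipschitzOnWith.of_dist_le_mul fun z hz w hw => ?_
    obtain ⟨a, ha, rfl⟩ := hz
    obtain ⟨b, hb, rfl⟩ := hw
    have ha1 : Function.invFunOn φ S (φ a) ∈ S := Function.invFunOn_mem ⟨a, ha, rfl⟩
    have ha2 : φ (Function.invFunOn φ S (φ a)) = φ a := Function.invFunOn_eq ⟨a, ha, rfl⟩
    have hb1 : Function.invFunOn φ S (φ b) ∈ S := Function.invFunOn_mem ⟨b, hb, rfl⟩
    have hb2 : φ (Function.invFunOn φ S (φ b)) = φ b := Function.invFunOn_eq ⟨b, hb, rfl⟩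
    have h6 := hlow _ ha1 _ hb1
    rw [ha2, hb2] at h6
    calc dist (Function.invFunOn φ S (φ a)) (Function.invFunOn φ S (φ b))
        ≤ 2 * dist (φ a) (φ b) := h6
      _ = (2:NNReal) * dist (φ a) (φ b) := by norm_num
  · intro y hy
    refine ⟨φ y, mem_image_of_mem _ hy, ?_⟩
    have h1 : Function.invFunOn φ S (φ y) ∈ S := Function.invFunOn_mem ⟨y, hy, rfl⟩
    have h2 : φ (Function.invFunOn φ S (φ y)) = φ y := Function.invFunOn_eq ⟨y, hy, rfl⟩
    have h3 := hlow _ h1 _ hy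
    rw [h2] at h3
    simp only [dist_self, mul_zero] at h3
    exact dist_le_zero.1 h3


/-- The span of the family `w`. -/
noncomputable def Vsp {n d : ℕ} (w : Fin d → EuclideanSpace ℝ (Fin n)) :
    Submodule ℝ (EuclideanSpace ℝ (Fin n)) :=
  Submodule.span ℝ (Set.range w)

theorem Vsp_rank_le {n d : ℕ} (w : Fin d → EuclideanSpace ℝ (Fin n)) :
    finrank ℝ (Vsp w) ≤ d := by
  exact le_of_le_of_eq (finrank_range_le_card (R := ℝ) w) (Fintype.card_fin d)

/-- The piece of the tangent set associated to data `(w, k, c)`. -/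
def SS {n d : ℕ} (E : Set (EuclideanSpace ℝ (Fin n))) (w : Fin d → EuclideanSpace ℝ (Fin n))
    (k : ℕ) (c : EuclideanSpace ℝ (Fin n)) : Set (EuclideanSpace ℝ (Fin n)) :=
  {x | x ∈ E ∧ ∀ y ∈ E, dist y x < 1 / ((k : ℝ) + 1) →
      ‖(y - x) - (Submodule.orthogonalProjectionOnto (Vsp w) (y - x) : EuclideanSpace ℝ (Fin n))‖
        ≤ dist y x / 2}
    ∩ ball c (1 / (4 * ((k : ℝ) + 1)))

theorem SS_chart {n d : ℕ} (E : Set (EuclideanSpace ℝ (Fin n)))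
    (w : Fin d → EuclideanSpace ℝ (Fin n)) (k : ℕ) (c : EuclideanSpace ℝ (Fin n)) :
    ∃ (s : Set (EuclideanSpace ℝ (Fin d)))
      (f : EuclideanSpace ℝ (Fin d) → EuclideanSpace ℝ (Fin n)),
      LipschitzOnWith 2 f s ∧ SS E w k c ⊆ f '' s := by
  refine chart (Vsp w) (Vsp_rank_le w) _ ?_
  intro x hx y hy
  refine hx.1.2 y hy.1.1 ?_
  have h2 := mem_ball.1 hx.2
  have h3 := mem_ball.1 hy.2
  have h4 := dist_triangle y c x
  have h5 : dist c x = dist x c := dist_comm _ _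
  have h6 : 1 / (4 * ((k : ℝ) + 1)) = (1 / ((k : ℝ) + 1)) / 4 := by
    rw [div_div, mul_comm]
  have h7 : (0:ℝ) < 1 / ((k : ℝ) + 1) := by positivity
  rw [h6] at h2 h3
  linarith

theorem mem_SS_of_tangent {n d : ℕ} (hd : 0 < d) (E Q : Set (EuclideanSpace ℝ (Fin n)))
    (hQd : Dense Q) {x : EuclideanSpace ℝ (Fin n)} (hxE : x ∈ E)
    (hxT : TangentPoint d E x) :
    ∃ (w : Fin d → EuclideanSpace ℝ (Fin n)) (k : ℕ) (c : EuclideanSpace ℝ (Fin n)),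
      (∀ j, w j ∈ Q) ∧ c ∈ Q ∧ x ∈ SS E w k c := by
  obtain ⟨L, ⟨z, V₀, hV₀rank, hLeq⟩, htend⟩ := hxT
  have hLcl : IsClosed L := by
    have h1 : L = (fun y => y - z) ⁻¹' (V₀ : Set (EuclideanSpace ℝ (Fin n))) := hLeq
    rw [h1]
    exact (Submodule.closed_of_finiteDimensional V₀).preimage (continuous_id.sub continuous_const)
  have hLne : L.Nonempty := ⟨z, by simp [hLeq]⟩
  have hxmem : ∀ p, p ∈ L ↔ p - z ∈ V₀ := fun p => by rw [hLeq]; rfl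
  have hev : ∀ᶠ t in 𝓝[>] (0:ℝ), (⨆ y ∈ E ∩ ball x t, infDist y L / t) < 1/32 :=
    htend.eventually_lt_const (by norm_num)
  obtain ⟨u, hu, hsub⟩ := mem_nhdsGT_iff_exists_Ioo_subset.1 hev
  rw [mem_Ioi] at hu
  have hlt : ∀ t ∈ Ioo (0:ℝ) u, (⨆ y ∈ E ∩ ball x t, infDist y L / t) < 1/32 :=
    fun t ht => hsub ht
  have hsmall : ∀ t ∈ Ioo (0:ℝ) u, infDist x L < t := by
    intro t ht
    have hx' : x ∈ E ∩ ball x t := ⟨hxE, mem_ball_self ht.1⟩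
    have h1 := le_biSup_infDist L E x x ht.1 hx'
    have h2 := lt_of_le_of_lt h1 (hlt t ht)
    have h3 : infDist x L < 1/32 * t := (div_lt_iff₀ ht.1).1 h2
    linarith [ht.1]
  have hxL : x ∈ L := by
    refine (hLcl.mem_iff_infDist_zero hLne).2 ?_
    refine le_antisymm ?_ infDist_nonneg
    by_contra hpos
    push_neg at hpos
    have ht : min (u/2) (infDist x L) ∈ Ioo (0:ℝ) u :=
      ⟨lt_min (by linarith) hpos, lt_of_le_of_lt (min_le_left _ _) (by linarith)⟩
    exact absurd (hsmall _ ht) (not_lt.2 (min_le_right _ _))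
  have hstep2 : ∀ y ∈ E, dist y x < u/2 → infDist y L ≤ dist y x / 16 := by
    intro y hyE hyd
    rcases eq_or_ne y x with rfl | hne
    · simp [infDist_zero_of_mem hxL]
    · have hr : 0 < dist y x := dist_pos.2 hne
      have htI : (3/2) * dist y x ∈ Ioo (0:ℝ) u := ⟨by positivity, by linarith⟩
      have hy' : y ∈ E ∩ ball x ((3/2) * dist y x) := ⟨hyE, mem_ball.2 (by linarith)⟩
      have h1 := le_biSup_infDist L E x y htI.1 hy'
      have h2 := lt_of_le_of_lt h1 (hlt _ htI)
      have h3 : infDist y L < 1/32 * ((3/2) * dist y x) := (div_lt_iff₀ htI.1).1 h2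
      linarith
  obtain ⟨w, hwQ, hwapprox⟩ := approx_basis hd V₀ hV₀rank Q hQd
  obtain ⟨k, hk⟩ := exists_nat_one_div_lt (show (0:ℝ) < u/2 by linarith)
  obtain ⟨c, hcQ, hcd⟩ := hQd.exists_dist_lt x (show (0:ℝ) < 1/(4*((k:ℝ)+1)) by positivity)
  refine ⟨w, k, c, hwQ, hcQ, ⟨hxE, ?_⟩, mem_ball.2 hcd⟩
  intro y hyE hyd
  rcases eq_or_ne y x with rfl | hne
  · simp
  · have hr : 0 < dist y x := dist_pos.2 hne
    have hru : dist y x < u/2 := hyd.trans hk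
    have h5 := hstep2 y hyE hru
    have h6 : infDist y L < dist y x / 8 := lt_of_le_of_lt h5 (by linarith)
    obtain ⟨p, hpL, hpd⟩ := (infDist_lt_iff hLne).1 h6
    have hpV : p - x ∈ V₀ := by
      have h7 : p - z ∈ V₀ := (hxmem p).1 hpL
      have h8 : x - z ∈ V₀ := (hxmem x).1 hxL
      have h9 : p - x = (p - z) - (x - z) := by abel
      rw [h9]; exact sub_mem h7 h8
    have hnv : ‖(y - x) - (p - x)‖ < dist y x / 8 := by
      have h10 : (y - x) - (p - x) = y - p := by abel
      rw [h10, ← dist_eq_norm]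
      exact hpd
    have hyx : ‖y - x‖ = dist y x := (dist_eq_norm y x).symm
    have hnp : ‖p - x‖ ≤ 2 * dist y x := by
      have h11 : ‖p - x‖ = ‖(y - x) - ((y - x) - (p - x))‖ := by abel_nf
      have h12 : ‖(y - x) - ((y - x) - (p - x))‖ ≤ ‖y - x‖ + ‖(y - x) - (p - x)‖ :=
        norm_sub_le _ _
      rw [h11]
      rw [hyx] at h12
      linarith
    obtain ⟨q0, hq0mem, hq0⟩ := hwapprox (p - x) hpV
    have hfinal : ‖(y - x) - q0‖ ≤ dist y x / 2 := by
      have h13 : ‖(y - x) - q0‖ ≤ ‖(y - x) - (p - x)‖ + ‖(p - x) - q0‖ := by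
        have h14 : (y - x) - q0 = ((y - x) - (p - x)) + ((p - x) - q0) := by abel
        rw [h14]
        exact norm_add_le _ _
      have h15 : ‖(p - x) - q0‖ ≤ ‖p - x‖ / 8 := hq0
      linarith
    have h16 : q0 ∈ Vsp w := hq0mem
    calc ‖(y - x) - (Submodule.orthogonalProjectionOnto (Vsp w) (y - x) : EuclideanSpace ℝ (Fin n))‖
        ≤ ‖(y - x) - q0‖ := proj_le (Vsp w) (y - x) h16
      _ ≤ dist y x / 2 := hfinal

end Stmt11Aux

theorem stmt11 {n d : ℕ} (hd : 0 < d) (hdn : d < n)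
    (E : Set (EuclideanSpace ℝ (Fin n))) :
    ∃ (s : ℕ → Set (EuclideanSpace ℝ (Fin d)))
      (f : ℕ → EuclideanSpace ℝ (Fin d) → EuclideanSpace ℝ (Fin n))
      (K : ℕ → NNReal),
      (∀ i, LipschitzOnWith (K i) (f i) (s i)) ∧
      {x ∈ E | TangentPoint d E x} ⊆ ⋃ i, f i '' s i := by
  classical
  obtain ⟨Q, hQc, hQd⟩ := TopologicalSpace.exists_countable_dense (EuclideanSpace ℝ (Fin n))
  haveI : Countable Q := hQc.to_subtype
  haveI : Nonempty Q := hQd.nonempty.to_subtype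
  have key : ∀ i : (Fin d → Q) × ℕ × Q,
      ∃ (s : Set (EuclideanSpace ℝ (Fin d)))
        (f : EuclideanSpace ℝ (Fin d) → EuclideanSpace ℝ (Fin n)),
        LipschitzOnWith 2 f s ∧
          Stmt11Aux.SS E (fun j => ((i.1 j : EuclideanSpace ℝ (Fin n)))) i.2.1
            (i.2.2 : EuclideanSpace ℝ (Fin n)) ⊆ f '' s :=
    fun i => Stmt11Aux.SS_chart E _ _ _
  choose s0 f0 hLip hcov using key
  obtain ⟨F, hF⟩ := exists_surjective_nat ((Fin d → Q) × ℕ × Q)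
  refine ⟨fun m => s0 (F m), fun m => f0 (F m), fun _ => 2, fun m => hLip (F m), ?_⟩
  rintro x ⟨hxE, hxT⟩
  obtain ⟨w, k, c, hwQ, hcQ, hmem⟩ :=
    Stmt11Aux.mem_SS_of_tangent hd E Q hQd hxE hxT
  have hmem' : x ∈ Stmt11Aux.SS E
      (fun j => (((⟨w j, hwQ j⟩ : Q) : EuclideanSpace ℝ (Fin n)))) k
      ((⟨c, hcQ⟩ : Q) : EuclideanSpace ℝ (Fin n)) := hmem
  obtain ⟨m, hm⟩ := hF ⟨fun j => ⟨w j, hwQ j⟩, k, ⟨c, hcQ⟩⟩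
  refine mem_iUnion.2 ⟨m, ?_⟩
  apply hcov
  rw [hm]
  exact hmem'
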